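/- Let O₁ = (Y₁, A₁, X₁), …, Oₙ = (Yₙ, Aₙ, Xₙ) (n ≥ 2) be i.i.d. copies of (Y, A, X), where X takes values in a measurable space S, and let b̂, p̂ : S → ℝ and z̄ : S → ℝᵏ be bounded measurable with Ω := E[z̄(X) z̄(X)ᵀ] invertible. Assume E[Y − b̂(X) | σ(X)] = 0 and E[A − p̂(X) | σ(X)] = 0 almost surely, and |Y − b̂(X)| ≤ C, |A − p̂(X)| ≤ C almost surely for a constant C. Then the statistic ÎF₂₂ := (1/(n(n−1))) Σ_{i₁ ≠ i₂} (Y_{i₁} − b̂(X_{i₁})) z̄(X_{i₁})ᵀ Ω⁻¹ z̄(X_{i₂}) (A_{i₂} − p̂(X_{i₂})) has mean zero and variance at most 2C⁴ k / (n(n−1)). -/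

import Mathlib

open MeasureTheory ProbabilityTheory

lemma aux_int_bdd {α : Type*} [MeasurableSpace α] {ν : Measure α}
    [IsFiniteMeasure ν] {f : α → ℝ} (hf : AEStronglyMeasurable f ν) {B : ℝ}
    (h : ∀ᵐ x ∂ν, |f x| ≤ B) : Integrable f ν :=
  Integrable.mono' (integrable_const B) hf (h.mono fun _ hx => by simpa using hx)

lemma aux_pi_prod {Ω : Type*} [MeasurableSpace Ω] (P : Measure Ω) [IsProbabilityMeasure P]
    {n : ℕ} (F : Fin n → Ω → ℝ) :
    ∫ ω, ∏ m, F m (ω m) ∂(Measure.pi fun _ : Fin n => P) = ∏ m, ∫ x, F m x ∂P := by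
  letI : MeasureSpace Ω := ⟨P⟩
  have hv : (Measure.pi fun _ : Fin n => P) = (volume : Measure (Fin n → Ω)) := by
    rw [volume_pi]; rfl
  rw [hv]
  exact integral_fintype_prod_eq_prod F

lemma aux_trace {k : ℕ} (G : Matrix (Fin k) (Fin k) ℝ) (hsym : ∀ i j, G i j = G j i)
    (h : IsUnit G) :
    ∑ a : Fin k, ∑ c : Fin k, ∑ a' : Fin k, ∑ c' : Fin k,
      G⁻¹ a c * G⁻¹ a' c' * (G a a' * G c c') = k := by
  have hd : IsUnit G.det := (Matrix.isUnit_iff_isUnit_det G).mp h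
  have h1 : G⁻¹ * G = 1 := Matrix.nonsing_inv_mul G hd
  have key : ∀ a c, (∑ a' : Fin k, ∑ c' : Fin k,
      G⁻¹ a c * G⁻¹ a' c' * (G a a' * G c c')) = G⁻¹ a c * G a c := by
    intro a c
    have step1 : ∀ a', (∑ c' : Fin k, G⁻¹ a c * G⁻¹ a' c' * (G a a' * G c c'))
        = G⁻¹ a c * G a a' * (1 : Matrix (Fin k) (Fin k) ℝ) a' c := by
      intro a'
      rw [← h1, Matrix.mul_apply, Finset.mul_sum]
      refine Finset.sum_congr rfl fun c' _ => ?_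
      rw [hsym c c']; ring
    rw [Finset.sum_congr rfl fun a' _ => step1 a']
    simp [Matrix.one_apply, mul_ite]
  rw [Finset.sum_congr rfl fun a _ => Finset.sum_congr rfl fun c _ => key a c]
  have tr : ∀ a, (∑ c : Fin k, G⁻¹ a c * G a c) = (1 : Matrix (Fin k) (Fin k) ℝ) a a := by
    intro a; rw [← h1, Matrix.mul_apply]
    exact Finset.sum_congr rfl fun c _ => by rw [hsym a c]
  rw [Finset.sum_congr rfl fun a _ => tr a]
  simp [Matrix.one_apply]

lemma aux_pair {Ω : Type*} [MeasurableSpace Ω] (P : Measure Ω) [IsProbabilityMeasure P]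
    {n : ℕ} {i j : Fin n} (hij : i ≠ j) (f g : Ω → ℝ) :
    ∫ ω, f (ω i) * g (ω j) ∂(Measure.pi fun _ : Fin n => P)
      = (∫ x, f x ∂P) * ∫ x, g x ∂P := by
  classical
  have hpt : ∀ ω : Fin n → Ω,
      f (ω i) * g (ω j)
        = ∏ m, ((if m = i then f (ω m) else 1) * (if m = j then g (ω m) else 1)) := by
    intro ω
    rw [Finset.prod_mul_distrib, Finset.prod_ite_eq', Finset.prod_ite_eq']
    simp
  calc ∫ ω, f (ω i) * g (ω j) ∂(Measure.pi fun _ : Fin n => P)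
      = ∫ ω, ∏ m, ((if m = i then f (ω m) else 1) * (if m = j then g (ω m) else 1))
          ∂(Measure.pi fun _ : Fin n => P) := by
        exact integral_congr_ae (Filter.Eventually.of_forall fun ω => hpt ω)
    _ = ∏ m, ∫ x, (if m = i then f x else 1) * (if m = j then g x else 1) ∂P :=
        aux_pi_prod P (fun m x => (if m = i then f x else 1) * (if m = j then g x else 1))
    _ = ∏ m, ((if m = i then ∫ x, f x ∂P else 1) * (if m = j then ∫ x, g x ∂P else 1)) := by
        refine Finset.prod_congr rfl fun m _ => ?_
        by_cases h1 : m = i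
        · subst h1; simp [hij]
        · by_cases h2 : m = j
          · subst h2; simp [h1]
          · simp [h1, h2]
    _ = (∫ x, f x ∂P) * ∫ x, g x ∂P := by
        rw [Finset.prod_mul_distrib, Finset.prod_ite_eq', Finset.prod_ite_eq']
        simp

lemma aux_quad {Ω : Type*} [MeasurableSpace Ω] (P : Measure Ω) [IsProbabilityMeasure P]
    {n : ℕ} (i₁ i₂ j₁ j₂ : Fin n) (f₁ f₂ f₃ f₄ : Ω → ℝ) :
    ∫ ω, f₁ (ω i₁) * f₂ (ω i₂) * (f₃ (ω j₁) * f₄ (ω j₂)) ∂(Measure.pi fun _ : Fin n => P)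
      = ∏ m, ∫ x, (if m = i₁ then f₁ x else 1) * (if m = i₂ then f₂ x else 1)
          * ((if m = j₁ then f₃ x else 1) * (if m = j₂ then f₄ x else 1)) ∂P := by
  classical
  have hpt : ∀ ω : Fin n → Ω,
      f₁ (ω i₁) * f₂ (ω i₂) * (f₃ (ω j₁) * f₄ (ω j₂))
        = ∏ m, ((if m = i₁ then f₁ (ω m) else 1) * (if m = i₂ then f₂ (ω m) else 1)
            * ((if m = j₁ then f₃ (ω m) else 1) * (if m = j₂ then f₄ (ω m) else 1))) := by
    intro ω
    rw [Finset.prod_mul_distrib, Finset.prod_mul_distrib, Finset.prod_mul_distrib,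
      Finset.prod_ite_eq', Finset.prod_ite_eq', Finset.prod_ite_eq', Finset.prod_ite_eq']
    simp
  rw [integral_congr_ae (Filter.Eventually.of_forall fun ω => hpt ω)]
  exact aux_pi_prod P (fun m x => (if m = i₁ then f₁ x else 1) * (if m = i₂ then f₂ x else 1)
    * ((if m = j₁ then f₃ x else 1) * (if m = j₂ then f₄ x else 1)))

theorem stmt7 {Ω S : Type*} [MeasurableSpace Ω] [MeasurableSpace S]
    (P : Measure Ω) [IsProbabilityMeasure P]
    (X : Ω → S) (hX : Measurable X)
    (Y A : Ω → ℝ) (hY : Measurable Y) (hA : Measurable A)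
    (bh ph : S → ℝ) (hbh : Measurable bh) (hph : Measurable ph)
    {k : ℕ} (z : S → Fin k → ℝ) (hz : ∀ j, Measurable fun s => z s j)
    (Cz : ℝ) (hzB : ∀ s j, |z s j| ≤ Cz)
    (G : Matrix (Fin k) (Fin k) ℝ)
    (hG : ∀ i j, G i j = ∫ ω, z (X ω) i * z (X ω) j ∂P)
    (hGinv : IsUnit G)
    (hYc : P[(fun ω => Y ω - bh (X ω)) | MeasurableSpace.comap X inferInstance] =ᵐ[P] 0)
    (hAc : P[(fun ω => A ω - ph (X ω)) | MeasurableSpace.comap X inferInstance] =ᵐ[P] 0)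
    (C : ℝ)
    (hYb : ∀ᵐ ω ∂P, |Y ω - bh (X ω)| ≤ C)
    (hAb : ∀ᵐ ω ∂P, |A ω - ph (X ω)| ≤ C)
    (n : ℕ) (hn : 2 ≤ n)
    (U : (Fin n → Ω) → ℝ)
    (hU : U = fun ω =>
      ((n : ℝ) * ((n : ℝ) - 1))⁻¹ *
        ∑ i₁ : Fin n, ∑ i₂ : Fin n,
          (if i₁ = i₂ then 0 else
            (Y (ω i₁) - bh (X (ω i₁))) *
              (∑ a, ∑ c, z (X (ω i₁)) a * G⁻¹ a c * z (X (ω i₂)) c) *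
              (A (ω i₂) - ph (X (ω i₂))))) :
    (∫ ω, U ω ∂(Measure.pi fun _ : Fin n => P)) = 0
    ∧ variance U (Measure.pi fun _ : Fin n => P)
        ≤ 2 * C ^ 4 * (k : ℝ) / ((n : ℝ) * ((n : ℝ) - 1)) := by
  classical
  set μ : Measure (Fin n → Ω) := Measure.pi fun _ : Fin n => P with hμdef
  haveI hμprob : IsProbabilityMeasure μ := by rw [hμdef]; infer_instance
  set N : ℝ := (n : ℝ) * ((n : ℝ) - 1) with hNdef
  have hn2 : (2 : ℝ) ≤ (n : ℝ) := by exact_mod_cast hn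
  have hNpos : 0 < N := by rw [hNdef]; nlinarith
  set ε : Ω → ℝ := fun ω => Y ω - bh (X ω) with hεdef
  set δ : Ω → ℝ := fun ω => A ω - ph (X ω) with hδdef
  set K : Ω → Ω → ℝ := fun x y => ∑ a, ∑ c, z (X x) a * G⁻¹ a c * z (X y) c with hKdef
  have hεb : ∀ᵐ ω ∂P, |ε ω| ≤ C := hYb
  have hδb : ∀ᵐ ω ∂P, |δ ω| ≤ C := hAb
  have hC0 : 0 ≤ C := by
    obtain ⟨ω₀, h₀⟩ := hεb.exists
    exact (abs_nonneg _).trans h₀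
  have hXm : ∀ a : Fin k, Measurable fun x => z (X x) a := fun a => (hz a).comp hX
  have hεm : Measurable ε := hY.sub (hbh.comp hX)
  have hδm : Measurable δ := hA.sub (hph.comp hX)
  have hzb' : ∀ (x : Ω) (a : Fin k), |z (X x) a| ≤ |Cz| :=
    fun x a => (hzB _ a).trans (le_abs_self _)
  -- symmetry of G
  have hsym : ∀ i j, G i j = G j i := by
    intro i j; rw [hG, hG]
    exact integral_congr_ae (Filter.Eventually.of_forall fun ω => mul_comm _ _)
  have hGisym : ∀ a c, G⁻¹ a c = G⁻¹ c a := by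
    intro a c
    have hGT : G.transpose = G := Matrix.ext fun i j => hsym j i
    calc G⁻¹ a c = G⁻¹.transpose c a := rfl
      _ = (G.transpose)⁻¹ c a := by rw [Matrix.transpose_nonsing_inv]
      _ = G⁻¹ c a := by rw [hGT]
  have hKsymm : ∀ x y, K x y = K y x := by
    intro x y
    rw [hKdef]
    calc (∑ a, ∑ c, z (X x) a * G⁻¹ a c * z (X y) c)
        = ∑ c, ∑ a, z (X x) a * G⁻¹ a c * z (X y) c := Finset.sum_comm
      _ = ∑ a, ∑ c, z (X y) a * G⁻¹ a c * z (X x) c := by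
          refine Finset.sum_congr rfl fun a _ => Finset.sum_congr rfl fun c _ => ?_
          rw [hGisym c a]; ring
  -- bound on K
  set DK : ℝ := ∑ a : Fin k, ∑ c : Fin k, |G⁻¹ a c| * (|Cz| * |Cz|) with hDKdef
  have hDK0 : 0 ≤ DK :=
    Finset.sum_nonneg fun a _ => Finset.sum_nonneg fun c _ =>
      mul_nonneg (abs_nonneg _) (mul_nonneg (abs_nonneg _) (abs_nonneg _))
  have hKb : ∀ x y, |K x y| ≤ DK := by
    intro x y
    rw [hKdef, hDKdef]
    calc |∑ a, ∑ c, z (X x) a * G⁻¹ a c * z (X y) c|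
        ≤ ∑ a, |∑ c, z (X x) a * G⁻¹ a c * z (X y) c| := Finset.abs_sum_le_sum_abs _ _
      _ ≤ ∑ a, ∑ c, |z (X x) a * G⁻¹ a c * z (X y) c| :=
          Finset.sum_le_sum fun a _ => Finset.abs_sum_le_sum_abs _ _
      _ ≤ ∑ a : Fin k, ∑ c : Fin k, |G⁻¹ a c| * (|Cz| * |Cz|) := by
          refine Finset.sum_le_sum fun a _ => Finset.sum_le_sum fun c _ => ?_
          rw [abs_mul, abs_mul]
          calc |z (X x) a| * |G⁻¹ a c| * |z (X y) c|
              ≤ |Cz| * |G⁻¹ a c| * |Cz| := by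
                have h1 := hzb' x a
                have h2 := hzb' y c
                have h3 := abs_nonneg (G⁻¹ a c)
                have h4 := abs_nonneg (z (X x) a)
                have h5 := abs_nonneg (z (X y) c)
                have h6 := abs_nonneg Cz
                exact mul_le_mul (mul_le_mul h1 le_rfl h3 h6) h2 h5 (mul_nonneg h6 h3)
            _ = |G⁻¹ a c| * (|Cz| * |Cz|) := by ring
  have hKmeas : ∀ i j : Fin n, Measurable fun ω : Fin n → Ω => K (ω i) (ω j) := by
    intro i j
    simp only [hKdef]
    refine Finset.measurable_sum _ fun a _ => Finset.measurable_sum _ fun c _ => ?_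
    exact (((hXm a).comp (measurable_pi_apply i)).mul measurable_const).mul
      ((hXm c).comp (measurable_pi_apply j))
  -- transfer of a.e. statements to coordinates
  have hcoord : ∀ (i : Fin n) (p : Ω → Prop), (∀ᵐ x ∂P, p x) → ∀ᵐ ω ∂μ, p (ω i) := by
    intro i p hp
    exact (MeasureTheory.Measure.tendsto_eval_ae_ae).eventually hp
  -- degeneracy: conditional mean zero implies product means vanish
  have hm : MeasurableSpace.comap X inferInstance ≤ (inferInstance : MeasurableSpace Ω) :=
    hX.comap_le
  have hkey : ∀ (W : Ω → ℝ), Measurable W → (∀ᵐ ω ∂P, |W ω| ≤ C) →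
      (P[W | MeasurableSpace.comap X inferInstance] =ᵐ[P] 0) →
      ∀ (g : S → ℝ), Measurable g → ∀ B : ℝ, 0 ≤ B → (∀ s, |g s| ≤ B) →
      ∫ ω, W ω * g (X ω) ∂P = 0 := by
    intro W hWm hWb hWc g hg B hB0 hB
    have hWi : Integrable W P := aux_int_bdd hWm.aestronglyMeasurable hWb
    have hgX : Measurable[MeasurableSpace.comap X inferInstance] fun ω => g (X ω) :=
      hg.comp (Measurable.of_comap_le le_rfl)
    have hfg : Integrable ((fun ω => g (X ω)) * W) P := by
      refine aux_int_bdd ((hg.comp hX).mul hWm).aestronglyMeasurable (B := B * C) ?_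
      filter_upwards [hWb] with ω hω
      rw [Pi.mul_apply, abs_mul]
      exact mul_le_mul (hB _) hω (abs_nonneg _) hB0
    have h1 : ∫ ω, W ω * g (X ω) ∂P = ∫ ω, ((fun ω => g (X ω)) * W) ω ∂P :=
      integral_congr_ae (Filter.Eventually.of_forall fun ω => by simp [mul_comm])
    rw [h1, ← integral_condExp hm]
    have h2 := condExp_mul_of_stronglyMeasurable_left hgX.stronglyMeasurable hfg hWi
    have h3 : ((fun ω => g (X ω)) * P[W | MeasurableSpace.comap X inferInstance]) =ᵐ[P]
        (0 : Ω → ℝ) := by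
      filter_upwards [hWc] with ω hω
      simp only [Pi.mul_apply, Pi.zero_apply] at *
      rw [hω, mul_zero]
    rw [integral_congr_ae (h2.trans h3)]
    simp
  have hfa0 : ∀ a : Fin k, ∫ x, ε x * z (X x) a ∂P = 0 := fun a =>
    hkey ε hεm hεb hYc (fun s => z s a) (hz a) |Cz| (abs_nonneg _)
      (fun s => (hzB s a).trans (le_abs_self _))
  have hgc0 : ∀ c : Fin k, ∫ x, δ x * z (X x) c ∂P = 0 := fun c =>
    hkey δ hδm hδb hAc (fun s => z s c) (hz c) |Cz| (abs_nonneg _)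
      (fun s => (hzB s c).trans (le_abs_self _))
  -- generic integrability on the product space
  have hint2 : ∀ (i j : Fin n) (f g : Ω → ℝ) (Bf Bg : ℝ), Measurable f → Measurable g →
      (∀ᵐ x ∂P, |f x| ≤ Bf) → (∀ᵐ x ∂P, |g x| ≤ Bg) →
      Integrable (fun ω : Fin n → Ω => f (ω i) * g (ω j)) μ := by
    intro i j f g Bf Bg hf hg hbf hbg
    have hBf0 : 0 ≤ Bf := by
      obtain ⟨x₀, h₀⟩ := hbf.exists
      exact (abs_nonneg _).trans h₀
    refine aux_int_bdd ((hf.comp (measurable_pi_apply i)).mul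
      (hg.comp (measurable_pi_apply j))).aestronglyMeasurable (B := Bf * Bg) ?_
    filter_upwards [hcoord i _ hbf, hcoord j _ hbg] with ω h1 h2
    rw [abs_mul]
    exact mul_le_mul h1 h2 (abs_nonneg _) hBf0
  -- mean-zero of individual U-statistic terms
  have hterm0 : ∀ i j : Fin n, i ≠ j →
      ∫ ω, ε (ω i) * K (ω i) (ω j) * δ (ω j) ∂μ = 0 := by
    intro i j hij
    have hpt : ∀ ω : Fin n → Ω, ε (ω i) * K (ω i) (ω j) * δ (ω j)
        = ∑ a, ∑ c, G⁻¹ a c * ((ε (ω i) * z (X (ω i)) a) * (δ (ω j) * z (X (ω j)) c)) := by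
      intro ω
      simp only [hKdef, Finset.mul_sum, Finset.sum_mul]
      exact Finset.sum_congr rfl fun a _ => Finset.sum_congr rfl fun c _ => by ring
    rw [integral_congr_ae (Filter.Eventually.of_forall hpt)]
    rw [integral_finset_sum _ (fun a _ => integrable_finset_sum _ fun c _ =>
      ((hint2 i j (fun x => ε x * z (X x) a) (fun x => δ x * z (X x) c) (C * |Cz|) (C * |Cz|) (hεm.mul (hXm a)) (hδm.mul (hXm c))
        (by filter_upwards [hεb] with x hx
            show |ε x * z (X x) a| ≤ C * |Cz|
            rw [abs_mul]
            exact mul_le_mul hx (hzb' x a) (abs_nonneg _) hC0)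
        (by filter_upwards [hδb] with x hx
            show |δ x * z (X x) c| ≤ C * |Cz|
            rw [abs_mul]
            exact mul_le_mul hx (hzb' x c) (abs_nonneg _) hC0)).const_mul (G⁻¹ a c)))]
    refine Finset.sum_eq_zero fun a _ => ?_
    rw [integral_finset_sum _ (fun c _ =>
      ((hint2 i j (fun x => ε x * z (X x) a) (fun x => δ x * z (X x) c) (C * |Cz|) (C * |Cz|) (hεm.mul (hXm a)) (hδm.mul (hXm c))
        (by filter_upwards [hεb] with x hx
            show |ε x * z (X x) a| ≤ C * |Cz|
            rw [abs_mul]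
            exact mul_le_mul hx (hzb' x a) (abs_nonneg _) hC0)
        (by filter_upwards [hδb] with x hx
            show |δ x * z (X x) c| ≤ C * |Cz|
            rw [abs_mul]
            exact mul_le_mul hx (hzb' x c) (abs_nonneg _) hC0)).const_mul (G⁻¹ a c)))]
    refine Finset.sum_eq_zero fun c _ => ?_
    rw [integral_const_mul,
      aux_pair P hij (fun x => ε x * z (X x) a) (fun x => δ x * z (X x) c), hfa0 a,
      zero_mul, mul_zero]
  -- second moment of K
  have hK2 : ∀ i j : Fin n, i ≠ j → ∫ ω, K (ω i) (ω j) ^ 2 ∂μ = k := by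
    intro i j hij
    have hpt : ∀ ω : Fin n → Ω, K (ω i) (ω j) ^ 2
        = ∑ a, ∑ a', ∑ c, ∑ c', (G⁻¹ a c * G⁻¹ a' c') *
            ((z (X (ω i)) a * z (X (ω i)) a') * (z (X (ω j)) c * z (X (ω j)) c')) := by
      intro ω
      rw [pow_two]
      simp only [hKdef, Finset.sum_mul_sum]
      refine Finset.sum_congr rfl fun a _ => Finset.sum_congr rfl fun a' _ => ?_
      refine Finset.sum_congr rfl fun c _ => Finset.sum_congr rfl fun c' _ => by ring
    have hintz : ∀ (a a' c c' : Fin k), Integrable (fun ω : Fin n → Ω =>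
        (G⁻¹ a c * G⁻¹ a' c') *
          ((z (X (ω i)) a * z (X (ω i)) a') * (z (X (ω j)) c * z (X (ω j)) c'))) μ := by
      intro a a' c c'
      refine ((hint2 i j _ _ (|Cz| * |Cz|) (|Cz| * |Cz|) ((hXm a).mul (hXm a'))
        ((hXm c).mul (hXm c')) ?_ ?_).const_mul _)
      · refine Filter.Eventually.of_forall fun x => ?_
        rw [Pi.mul_apply, abs_mul]
        exact mul_le_mul (hzb' x a) (hzb' x a') (abs_nonneg _) (abs_nonneg _)
      · refine Filter.Eventually.of_forall fun x => ?_
        rw [Pi.mul_apply, abs_mul]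
        exact mul_le_mul (hzb' x c) (hzb' x c') (abs_nonneg _) (abs_nonneg _)
    rw [integral_congr_ae (Filter.Eventually.of_forall hpt)]
    rw [integral_finset_sum _ (fun a _ => integrable_finset_sum _ fun a' _ =>
      integrable_finset_sum _ fun c _ => integrable_finset_sum _ fun c' _ => hintz a a' c c')]
    calc (∑ a, ∫ ω, (∑ a', ∑ c, ∑ c', (G⁻¹ a c * G⁻¹ a' c') *
            ((z (X (ω i)) a * z (X (ω i)) a') * (z (X (ω j)) c * z (X (ω j)) c'))) ∂μ)
        = ∑ a, ∑ a', ∑ c, ∑ c', G⁻¹ a c * G⁻¹ a' c' * (G a a' * G c c') := by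
          refine Finset.sum_congr rfl fun a _ => ?_
          rw [integral_finset_sum _ (fun a' _ => integrable_finset_sum _ fun c _ =>
            integrable_finset_sum _ fun c' _ => hintz a a' c c')]
          refine Finset.sum_congr rfl fun a' _ => ?_
          rw [integral_finset_sum _ (fun c _ => integrable_finset_sum _ fun c' _ =>
            hintz a a' c c')]
          refine Finset.sum_congr rfl fun c _ => ?_
          rw [integral_finset_sum _ (fun c' _ => hintz a a' c c')]
          refine Finset.sum_congr rfl fun c' _ => ?_
          rw [integral_const_mul,
            aux_pair P hij (fun x => z (X x) a * z (X x) a') (fun x => z (X x) c * z (X x) c'),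
            ← hG a a', ← hG c c']
      _ = ∑ a, ∑ c, ∑ a', ∑ c', G⁻¹ a c * G⁻¹ a' c' * (G a a' * G c c') :=
          Finset.sum_congr rfl fun a _ => Finset.sum_comm
      _ = k := aux_trace G hsym hGinv
  -- vanishing of off-diagonal cross terms (solo coordinate argument)
  have hsolo : ∀ (i₁ i₂ j₁ j₂ : Fin n) (a c a' c' : Fin k), i₁ ≠ i₂ → j₁ ≠ j₂ →
      ¬(i₁ = j₁ ∧ i₂ = j₂) → ¬(i₁ = j₂ ∧ i₂ = j₁) →
      ∫ ω, (ε (ω i₁) * z (X (ω i₁)) a) * (δ (ω i₂) * z (X (ω i₂)) c) *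
        ((ε (ω j₁) * z (X (ω j₁)) a') * (δ (ω j₂) * z (X (ω j₂)) c')) ∂μ = 0 := by
    intro i₁ i₂ j₁ j₂ a c a' c' h12 h34 hne he
    rw [aux_quad P i₁ i₂ j₁ j₂ (fun x => ε x * z (X x) a) (fun x => δ x * z (X x) c)
      (fun x => ε x * z (X x) a') (fun x => δ x * z (X x) c')]
    by_cases h1 : i₁ = j₁
    · have k1 : i₂ ≠ i₁ := fun h => h12 h.symm
      have k2 : i₂ ≠ j₁ := h1 ▸ k1
      have k3 : i₂ ≠ j₂ := fun h => hne ⟨h1, h⟩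
      refine Finset.prod_eq_zero (Finset.mem_univ i₂) ?_
      simp only [if_neg k1, if_pos rfl, if_neg k2, if_neg k3]
      simpa using hgc0 c
    · by_cases h2 : i₁ = j₂
      · have k1 : i₂ ≠ i₁ := fun h => h12 h.symm
        have k2 : i₂ ≠ j₁ := fun h => he ⟨h2, h⟩
        have k3 : i₂ ≠ j₂ := fun h => h12 (h2.trans h.symm)
        refine Finset.prod_eq_zero (Finset.mem_univ i₂) ?_
        simp only [if_neg k1, if_pos rfl, if_neg k2, if_neg k3]
        simpa using hgc0 c
      · refine Finset.prod_eq_zero (Finset.mem_univ i₁) ?_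
        simp only [if_pos rfl, if_neg h12, if_neg h1, if_neg h2]
        simpa using hfa0 a
  -- vanishing of generic cross terms
  have hzero : ∀ (i₁ i₂ j₁ j₂ : Fin n), i₁ ≠ i₂ → j₁ ≠ j₂ →
      ¬(i₁ = j₁ ∧ i₂ = j₂) → ¬(i₁ = j₂ ∧ i₂ = j₁) →
      ∫ ω, (ε (ω i₁) * K (ω i₁) (ω i₂) * δ (ω i₂)) *
        (ε (ω j₁) * K (ω j₁) (ω j₂) * δ (ω j₂)) ∂μ = 0 := by
    intro i₁ i₂ j₁ j₂ h12 h34 hne he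
    have hpt : ∀ ω : Fin n → Ω, (ε (ω i₁) * K (ω i₁) (ω i₂) * δ (ω i₂)) *
        (ε (ω j₁) * K (ω j₁) (ω j₂) * δ (ω j₂))
        = ∑ a, ∑ a', ∑ c, ∑ c', (G⁻¹ a c * G⁻¹ a' c') *
            ((ε (ω i₁) * z (X (ω i₁)) a) * (δ (ω i₂) * z (X (ω i₂)) c) *
              ((ε (ω j₁) * z (X (ω j₁)) a') * (δ (ω j₂) * z (X (ω j₂)) c'))) := by
      intro ω
      have hre : (ε (ω i₁) * K (ω i₁) (ω i₂) * δ (ω i₂)) *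
          (ε (ω j₁) * K (ω j₁) (ω j₂) * δ (ω j₂))
          = (ε (ω i₁) * δ (ω i₂) * (ε (ω j₁) * δ (ω j₂))) *
            (K (ω i₁) (ω i₂) * K (ω j₁) (ω j₂)) := by ring
      have hKK : K (ω i₁) (ω i₂) * K (ω j₁) (ω j₂) = ∑ a, ∑ a', ∑ c, ∑ c',
          (z (X (ω i₁)) a * G⁻¹ a c * z (X (ω i₂)) c) *
            (z (X (ω j₁)) a' * G⁻¹ a' c' * z (X (ω j₂)) c') := by
        simp only [hKdef, Finset.sum_mul_sum]
      rw [hre, hKK]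
      simp only [Finset.mul_sum]
      refine Finset.sum_congr rfl fun a _ => Finset.sum_congr rfl fun a' _ => ?_
      refine Finset.sum_congr rfl fun c _ => Finset.sum_congr rfl fun c' _ => by ring
    have hint4 : ∀ (a a' c c' : Fin k), Integrable (fun ω : Fin n → Ω =>
        (G⁻¹ a c * G⁻¹ a' c') *
          ((ε (ω i₁) * z (X (ω i₁)) a) * (δ (ω i₂) * z (X (ω i₂)) c) *
            ((ε (ω j₁) * z (X (ω j₁)) a') * (δ (ω j₂) * z (X (ω j₂)) c')))) μ := by
      intro a a' c c'
      refine Integrable.const_mul ?_ _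
      have hCCz : 0 ≤ C * |Cz| := mul_nonneg hC0 (abs_nonneg _)
      refine aux_int_bdd (Measurable.aestronglyMeasurable ?_)
        (B := C * |Cz| * (C * |Cz|) * (C * |Cz| * (C * |Cz|))) ?_
      · exact (((hεm.comp (measurable_pi_apply i₁)).mul
          ((hXm a).comp (measurable_pi_apply i₁))).mul
          ((hδm.comp (measurable_pi_apply i₂)).mul
          ((hXm c).comp (measurable_pi_apply i₂)))).mul
          (((hεm.comp (measurable_pi_apply j₁)).mul
          ((hXm a').comp (measurable_pi_apply j₁))).mul
          ((hδm.comp (measurable_pi_apply j₂)).mul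
          ((hXm c').comp (measurable_pi_apply j₂))))
      · filter_upwards [hcoord i₁ _ hεb, hcoord i₂ _ hδb, hcoord j₁ _ hεb, hcoord j₂ _ hδb]
          with ω b1 b2 b3 b4
        have f1 : |ε (ω i₁)| * |z (X (ω i₁)) a| ≤ C * |Cz| :=
          mul_le_mul b1 (hzb' _ _) (abs_nonneg _) hC0
        have f2 : |δ (ω i₂)| * |z (X (ω i₂)) c| ≤ C * |Cz| :=
          mul_le_mul b2 (hzb' _ _) (abs_nonneg _) hC0
        have f3 : |ε (ω j₁)| * |z (X (ω j₁)) a'| ≤ C * |Cz| :=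
          mul_le_mul b3 (hzb' _ _) (abs_nonneg _) hC0
        have f4 : |δ (ω j₂)| * |z (X (ω j₂)) c'| ≤ C * |Cz| :=
          mul_le_mul b4 (hzb' _ _) (abs_nonneg _) hC0
        simp only [abs_mul]
        exact mul_le_mul (mul_le_mul f1 f2 (mul_nonneg (abs_nonneg _) (abs_nonneg _)) hCCz)
          (mul_le_mul f3 f4 (mul_nonneg (abs_nonneg _) (abs_nonneg _)) hCCz)
          (mul_nonneg (mul_nonneg (abs_nonneg _) (abs_nonneg _))
            (mul_nonneg (abs_nonneg _) (abs_nonneg _))) (mul_nonneg hCCz hCCz)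
    rw [integral_congr_ae (Filter.Eventually.of_forall hpt)]
    rw [integral_finset_sum _ (fun a _ => integrable_finset_sum _ fun a' _ =>
      integrable_finset_sum _ fun c _ => integrable_finset_sum _ fun c' _ => hint4 a a' c c')]
    refine Finset.sum_eq_zero fun a _ => ?_
    rw [integral_finset_sum _ (fun a' _ => integrable_finset_sum _ fun c _ =>
      integrable_finset_sum _ fun c' _ => hint4 a a' c c')]
    refine Finset.sum_eq_zero fun a' _ => ?_
    rw [integral_finset_sum _ (fun c _ => integrable_finset_sum _ fun c' _ => hint4 a a' c c')]
    refine Finset.sum_eq_zero fun c _ => ?_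
    rw [integral_finset_sum _ (fun c' _ => hint4 a a' c c')]
    refine Finset.sum_eq_zero fun c' _ => ?_
    rw [integral_const_mul, hsolo i₁ i₂ j₁ j₂ a c a' c' h12 h34 hne he, mul_zero]
  -- diagonal bounds
  have hint_hh : ∀ i j i' j' : Fin n, Integrable (fun ω : Fin n → Ω =>
      (ε (ω i) * K (ω i) (ω j) * δ (ω j)) * (ε (ω i') * K (ω i') (ω j') * δ (ω j'))) μ := by
    intro i j i' j'
    have hCD : 0 ≤ C * DK * C := mul_nonneg (mul_nonneg hC0 hDK0) hC0
    refine aux_int_bdd (Measurable.aestronglyMeasurable ?_)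
      (B := C * DK * C * (C * DK * C)) ?_
    · exact (((hεm.comp (measurable_pi_apply i)).mul (hKmeas i j)).mul
        (hδm.comp (measurable_pi_apply j))).mul
        (((hεm.comp (measurable_pi_apply i')).mul (hKmeas i' j')).mul
        (hδm.comp (measurable_pi_apply j')))
    · filter_upwards [hcoord i _ hεb, hcoord j _ hδb, hcoord i' _ hεb, hcoord j' _ hδb]
        with ω b1 b2 b3 b4
      have g1 : |ε (ω i)| * |K (ω i) (ω j)| * |δ (ω j)| ≤ C * DK * C :=
        mul_le_mul (mul_le_mul b1 (hKb _ _) (abs_nonneg _) hC0) b2 (abs_nonneg _)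
          (mul_nonneg hC0 hDK0)
      have g2 : |ε (ω i')| * |K (ω i') (ω j')| * |δ (ω j')| ≤ C * DK * C :=
        mul_le_mul (mul_le_mul b3 (hKb _ _) (abs_nonneg _) hC0) b4 (abs_nonneg _)
          (mul_nonneg hC0 hDK0)
      simp only [abs_mul]
      exact mul_le_mul g1 g2
        (mul_nonneg (mul_nonneg (abs_nonneg _) (abs_nonneg _)) (abs_nonneg _)) hCD
  have hdomK : ∀ i j : Fin n, Integrable (fun ω : Fin n → Ω => C ^ 4 * K (ω i) (ω j) ^ 2) μ := by
    intro i j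
    refine Integrable.const_mul ?_ _
    refine aux_int_bdd ((hKmeas i j).pow_const 2).aestronglyMeasurable (B := DK ^ 2)
      (Filter.Eventually.of_forall fun ω => ?_)
    rw [abs_pow]
    exact pow_le_pow_left₀ (abs_nonneg _) (hKb _ _) 2
  have hdiag : ∀ i j : Fin n, i ≠ j →
      ∫ ω, (ε (ω i) * K (ω i) (ω j) * δ (ω j)) * (ε (ω i) * K (ω i) (ω j) * δ (ω j)) ∂μ
        ≤ C ^ 4 * k := by
    intro i j hij
    have hle : ∀ᵐ ω ∂μ, (ε (ω i) * K (ω i) (ω j) * δ (ω j)) *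
        (ε (ω i) * K (ω i) (ω j) * δ (ω j)) ≤ C ^ 4 * K (ω i) (ω j) ^ 2 := by
      filter_upwards [hcoord i _ hεb, hcoord j _ hδb] with ω b1 b2
      have he2 : ε (ω i) ^ 2 ≤ C ^ 2 := by
        rw [← sq_abs]; exact pow_le_pow_left₀ (abs_nonneg _) b1 2
      have hd2 : δ (ω j) ^ 2 ≤ C ^ 2 := by
        rw [← sq_abs]; exact pow_le_pow_left₀ (abs_nonneg _) b2 2
      calc (ε (ω i) * K (ω i) (ω j) * δ (ω j)) * (ε (ω i) * K (ω i) (ω j) * δ (ω j))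
          = ε (ω i) ^ 2 * δ (ω j) ^ 2 * K (ω i) (ω j) ^ 2 := by ring
        _ ≤ C ^ 2 * C ^ 2 * K (ω i) (ω j) ^ 2 :=
            mul_le_mul_of_nonneg_right
              (mul_le_mul he2 hd2 (sq_nonneg _) (sq_nonneg _)) (sq_nonneg _)
        _ = C ^ 4 * K (ω i) (ω j) ^ 2 := by ring
    calc ∫ ω, (ε (ω i) * K (ω i) (ω j) * δ (ω j)) *
          (ε (ω i) * K (ω i) (ω j) * δ (ω j)) ∂μ
        ≤ ∫ ω, C ^ 4 * K (ω i) (ω j) ^ 2 ∂μ :=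
          integral_mono_ae (hint_hh i j i j) (hdomK i j) hle
      _ = C ^ 4 * k := by rw [integral_const_mul, hK2 i j hij]
  have hswap : ∀ i j : Fin n, i ≠ j →
      ∫ ω, (ε (ω i) * K (ω i) (ω j) * δ (ω j)) * (ε (ω j) * K (ω j) (ω i) * δ (ω i)) ∂μ
        ≤ C ^ 4 * k := by
    intro i j hij
    have hle : ∀ᵐ ω ∂μ, (ε (ω i) * K (ω i) (ω j) * δ (ω j)) *
        (ε (ω j) * K (ω j) (ω i) * δ (ω i)) ≤ C ^ 4 * K (ω i) (ω j) ^ 2 := by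
      filter_upwards [hcoord i _ hεb, hcoord j _ hδb, hcoord j _ hεb, hcoord i _ hδb]
        with ω b1 b2 b3 b4
      have habs : ε (ω i) * δ (ω i) * (ε (ω j) * δ (ω j)) ≤ C ^ 4 := by
        calc ε (ω i) * δ (ω i) * (ε (ω j) * δ (ω j))
            ≤ |ε (ω i) * δ (ω i) * (ε (ω j) * δ (ω j))| := le_abs_self _
          _ = |ε (ω i)| * |δ (ω i)| * (|ε (ω j)| * |δ (ω j)|) := by
              simp only [abs_mul]
          _ ≤ C * C * (C * C) :=
              mul_le_mul (mul_le_mul b1 b4 (abs_nonneg _) hC0)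
                (mul_le_mul b3 b2 (abs_nonneg _) hC0)
                (mul_nonneg (abs_nonneg _) (abs_nonneg _))
                (mul_nonneg hC0 hC0)
          _ = C ^ 4 := by ring
      calc (ε (ω i) * K (ω i) (ω j) * δ (ω j)) * (ε (ω j) * K (ω j) (ω i) * δ (ω i))
          = ε (ω i) * δ (ω i) * (ε (ω j) * δ (ω j)) * K (ω i) (ω j) ^ 2 := by
            rw [hKsymm (ω j) (ω i)]; ring
        _ ≤ C ^ 4 * K (ω i) (ω j) ^ 2 :=
            mul_le_mul_of_nonneg_right habs (sq_nonneg _)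
    calc ∫ ω, (ε (ω i) * K (ω i) (ω j) * δ (ω j)) *
          (ε (ω j) * K (ω j) (ω i) * δ (ω i)) ∂μ
        ≤ ∫ ω, C ^ 4 * K (ω i) (ω j) ^ 2 ∂μ :=
          integral_mono_ae (hint_hh i j j i) (hdomK i j) hle
      _ = C ^ 4 * k := by rw [integral_const_mul, hK2 i j hij]
  -- the U-statistic in terms of T
  set T : Fin n × Fin n → (Fin n → Ω) → ℝ := fun p ω =>
    if p.1 = p.2 then 0 else ε (ω p.1) * K (ω p.1) (ω p.2) * δ (ω p.2) with hTdef
  have hU2 : U = fun ω => N⁻¹ * ∑ p : Fin n × Fin n, T p ω := by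
    rw [hU]
    funext ω
    congr 1
    rw [Fintype.sum_prod_type]
  have hUapp : ∀ ω, U ω = N⁻¹ * ∑ p : Fin n × Fin n, T p ω := fun ω => by rw [hU2]
  have hTmeas : ∀ p : Fin n × Fin n, Measurable (T p) := by
    intro p
    simp only [hTdef]
    by_cases hp : p.1 = p.2
    · simp only [if_pos hp]; exact measurable_const
    · simp only [if_neg hp]
      exact ((hεm.comp (measurable_pi_apply p.1)).mul (hKmeas p.1 p.2)).mul
        (hδm.comp (measurable_pi_apply p.2))
  have hCD0 : 0 ≤ C * DK * C := mul_nonneg (mul_nonneg hC0 hDK0) hC0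
  have hTb : ∀ p : Fin n × Fin n, ∀ᵐ ω ∂μ, |T p ω| ≤ C * DK * C := by
    intro p
    by_cases hp : p.1 = p.2
    · refine Filter.Eventually.of_forall fun ω => ?_
      simp only [hTdef, if_pos hp, abs_zero]
      exact hCD0
    · filter_upwards [hcoord p.1 _ hεb, hcoord p.2 _ hδb] with ω b1 b2
      simp only [hTdef, if_neg hp, abs_mul]
      exact mul_le_mul (mul_le_mul b1 (hKb _ _) (abs_nonneg _) hC0) b2 (abs_nonneg _)
        (mul_nonneg hC0 hDK0)
  have hTint : ∀ p : Fin n × Fin n, Integrable (T p) μ := fun p =>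
    aux_int_bdd (hTmeas p).aestronglyMeasurable (hTb p)
  have hTTint : ∀ p q : Fin n × Fin n, Integrable (fun ω => T p ω * T q ω) μ := by
    intro p q
    refine aux_int_bdd ((hTmeas p).mul (hTmeas q)).aestronglyMeasurable
      (B := C * DK * C * (C * DK * C)) ?_
    filter_upwards [hTb p, hTb q] with ω b1 b2
    rw [abs_mul]
    exact mul_le_mul b1 b2 (abs_nonneg _) hCD0
  have hTmean : ∀ p : Fin n × Fin n, ∫ ω, T p ω ∂μ = 0 := by
    intro p
    by_cases hp : p.1 = p.2
    · have h0 : ∀ ω : Fin n → Ω, T p ω = 0 := fun ω => by simp only [hTdef, if_pos hp]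
      rw [integral_congr_ae (Filter.Eventually.of_forall h0)]
      simp
    · have h0 : ∀ ω : Fin n → Ω, T p ω
          = ε (ω p.1) * K (ω p.1) (ω p.2) * δ (ω p.2) := fun ω => by
        simp only [hTdef, if_neg hp]
      rw [integral_congr_ae (Filter.Eventually.of_forall h0)]
      exact hterm0 p.1 p.2 hp
  -- the mean
  have hmean : ∫ ω, U ω ∂μ = 0 := by
    rw [hU2, integral_const_mul, integral_finset_sum _ (fun p _ => hTint p)]
    rw [Finset.sum_eq_zero fun p _ => hTmean p, mul_zero]
  refine ⟨hmean, ?_⟩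
  -- integrability and second moment of U
  have hUmeas : Measurable U := by
    rw [hU2]
    exact measurable_const.mul (Finset.measurable_sum _ fun p _ => hTmeas p)
  have hball : ∀ᵐ ω ∂μ, ∀ p : Fin n × Fin n, |T p ω| ≤ C * DK * C := ae_all_iff.mpr hTb
  have hUb : ∀ᵐ ω ∂μ, ‖U ω‖ ≤ |N⁻¹| * ∑ _p : Fin n × Fin n, C * DK * C := by
    filter_upwards [hball] with ω hb
    rw [hUapp ω, Real.norm_eq_abs, abs_mul]
    refine mul_le_mul_of_nonneg_left ?_ (abs_nonneg _)
    exact (Finset.abs_sum_le_sum_abs _ _).trans (Finset.sum_le_sum fun p _ => hb p)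
  have hmem : MemLp U 2 μ := MemLp.of_bound hUmeas.aestronglyMeasurable _ hUb
  -- expand the variance
  have h2 : ∫ ω, (U ^ 2) ω ∂μ
      = N⁻¹ * N⁻¹ * ∑ p : Fin n × Fin n, ∑ q : Fin n × Fin n, ∫ ω, T p ω * T q ω ∂μ := by
    have hpt : ∀ ω : Fin n → Ω, (U ^ 2) ω
        = N⁻¹ * N⁻¹ * ∑ p : Fin n × Fin n, ∑ q : Fin n × Fin n, T p ω * T q ω := by
      intro ω
      rw [Pi.pow_apply, hUapp ω, pow_two, mul_mul_mul_comm, Finset.sum_mul_sum]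
    rw [integral_congr_ae (Filter.Eventually.of_forall hpt), integral_const_mul,
      integral_finset_sum _ (fun p _ => integrable_finset_sum _ fun q _ => hTTint p q)]
    congr 1
    exact Finset.sum_congr rfl fun p _ =>
      integral_finset_sum _ fun q _ => hTTint p q
  have hv : variance U μ
      = N⁻¹ * N⁻¹ * ∑ p : Fin n × Fin n, ∑ q : Fin n × Fin n, ∫ ω, T p ω * T q ω ∂μ := by
    rw [variance_eq_sub hmem, h2, hmean]
    ring
  -- bound each row of the double sum
  have hsum_q : ∀ p : Fin n × Fin n, (∑ q : Fin n × Fin n, ∫ ω, T p ω * T q ω ∂μ)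
      ≤ (if p.1 = p.2 then 0 else 2 * (C ^ 4 * k)) := by
    intro p
    by_cases hp : p.1 = p.2
    · rw [if_pos hp]
      refine le_of_eq (Finset.sum_eq_zero fun q _ => ?_)
      have h0 : ∀ ω : Fin n → Ω, T p ω * T q ω = 0 := fun ω => by
        simp only [hTdef, if_pos hp, zero_mul]
      rw [integral_congr_ae (Filter.Eventually.of_forall h0)]
      simp
    · rw [if_neg hp]
      have hpsw : p ≠ (p.2, p.1) := fun h => hp (congrArg Prod.fst h)
      have hswp : (p.2, p.1) ≠ p := hpsw.symm
      have hswd : (p.2, p.1).1 ≠ (p.2, p.1).2 := fun h => hp h.symm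
      have split : ∀ q : Fin n × Fin n, ∫ ω, T p ω * T q ω ∂μ
          = (if q = p then ∫ ω, T p ω * T p ω ∂μ else 0)
            + (if q = (p.2, p.1) then ∫ ω, T p ω * T (p.2, p.1) ω ∂μ else 0) := by
        intro q
        by_cases hq1 : q = p
        · subst hq1
          rw [if_pos rfl, if_neg hpsw, add_zero]
        · by_cases hq2 : q = (p.2, p.1)
          · subst hq2
            rw [if_neg hswp, if_pos rfl, zero_add]
          · rw [if_neg hq1, if_neg hq2, add_zero]
            by_cases hqd : q.1 = q.2
            · have h0 : ∀ ω : Fin n → Ω, T p ω * T q ω = 0 := fun ω => by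
                simp only [hTdef, if_pos hqd, mul_zero]
              rw [integral_congr_ae (Filter.Eventually.of_forall h0)]
              simp
            · have hne : ¬(p.1 = q.1 ∧ p.2 = q.2) := fun h =>
                hq1 (Prod.ext h.1 h.2).symm
              have hne2 : ¬(p.1 = q.2 ∧ p.2 = q.1) := fun h =>
                hq2 (Prod.ext h.2.symm h.1.symm)
              have h0 : ∀ ω : Fin n → Ω, T p ω * T q ω
                  = (ε (ω p.1) * K (ω p.1) (ω p.2) * δ (ω p.2)) *
                    (ε (ω q.1) * K (ω q.1) (ω q.2) * δ (ω q.2)) := fun ω => by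
                simp only [hTdef, if_neg hp, if_neg hqd]
              rw [integral_congr_ae (Filter.Eventually.of_forall h0)]
              exact hzero p.1 p.2 q.1 q.2 hp hqd hne hne2
      calc (∑ q : Fin n × Fin n, ∫ ω, T p ω * T q ω ∂μ)
          = ∑ q : Fin n × Fin n, ((if q = p then ∫ ω, T p ω * T p ω ∂μ else 0)
              + (if q = (p.2, p.1) then ∫ ω, T p ω * T (p.2, p.1) ω ∂μ else 0)) :=
            Finset.sum_congr rfl fun q _ => split q
        _ = (∫ ω, T p ω * T p ω ∂μ) + ∫ ω, T p ω * T (p.2, p.1) ω ∂μ := by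
            rw [Finset.sum_add_distrib, Finset.sum_ite_eq' Finset.univ p,
              Finset.sum_ite_eq' Finset.univ (p.2, p.1)]
            simp
        _ ≤ C ^ 4 * k + C ^ 4 * k := by
            refine add_le_add ?_ ?_
            · have h0 : ∀ ω : Fin n → Ω, T p ω * T p ω
                  = (ε (ω p.1) * K (ω p.1) (ω p.2) * δ (ω p.2)) *
                    (ε (ω p.1) * K (ω p.1) (ω p.2) * δ (ω p.2)) := fun ω => by
                simp only [hTdef, if_neg hp]
              rw [integral_congr_ae (Filter.Eventually.of_forall h0)]
              exact hdiag p.1 p.2 hp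
            · have h0 : ∀ ω : Fin n → Ω, T p ω * T (p.2, p.1) ω
                  = (ε (ω p.1) * K (ω p.1) (ω p.2) * δ (ω p.2)) *
                    (ε (ω p.2) * K (ω p.2) (ω p.1) * δ (ω p.1)) := fun ω => by
                simp only [hTdef, if_neg hp, if_neg hswd]
              rw [integral_congr_ae (Filter.Eventually.of_forall h0)]
              exact hswap p.1 p.2 hp
        _ = 2 * (C ^ 4 * k) := by ring
  -- counting
  have hcount : (∑ p : Fin n × Fin n, if p.1 = p.2 then (0:ℝ) else 2 * (C ^ 4 * k))
      = N * (2 * (C ^ 4 * k)) := by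
    rw [Fintype.sum_prod_type]
    have hrow : ∀ i : Fin n, (∑ j : Fin n, if (i, j).1 = (i, j).2 then (0:ℝ)
        else 2 * (C ^ 4 * k)) = (n : ℝ) * (2 * (C ^ 4 * k)) - 2 * (C ^ 4 * k) := by
      intro i
      have hterm : ∀ j : Fin n, (if (i, j).1 = (i, j).2 then (0:ℝ) else 2 * (C ^ 4 * k))
          = 2 * (C ^ 4 * k) - (if i = j then 2 * (C ^ 4 * k) else 0) := by
        intro j
        by_cases h : i = j <;> simp [h]
      rw [Finset.sum_congr rfl fun j _ => hterm j, Finset.sum_sub_distrib,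
        Finset.sum_const, Finset.sum_ite_eq, Finset.card_univ, Fintype.card_fin]
      simp [nsmul_eq_mul]
    rw [Finset.sum_congr rfl fun i _ => hrow i, Finset.sum_const, Finset.card_univ,
      Fintype.card_fin, hNdef]
    simp only [nsmul_eq_mul]
    ring
  -- conclusion
  rw [hv]
  have hNN : 0 ≤ N⁻¹ * N⁻¹ := mul_nonneg (inv_nonneg.mpr hNpos.le) (inv_nonneg.mpr hNpos.le)
  calc N⁻¹ * N⁻¹ * ∑ p : Fin n × Fin n, ∑ q : Fin n × Fin n, ∫ ω, T p ω * T q ω ∂μ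
      ≤ N⁻¹ * N⁻¹ * (N * (2 * (C ^ 4 * k))) := by
        refine mul_le_mul_of_nonneg_left ?_ hNN
        rw [← hcount]
        exact Finset.sum_le_sum fun p _ => hsum_q p
    _ = 2 * C ^ 4 * (k : ℝ) / N := by
        field_simp
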